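/- Let g = 2r + 1 with r ≥ 2. The group G_1 = π_g / N(ℬ^g_1) is isomorphic to the genus-r surface group π_r. -/
import Mathlib


namespace Paper

/-- The free group `F_g` on the `2g` generators `a_1, b_1, …, a_g, b_g`
(the pair `(i, false)` is `a_{i+1}`, the pair `(i, true)` is `b_{i+1}`). -/
abbrev F (g : ℕ) := FreeGroup (Fin g × Bool)

/-- The generator `a_i` of `F_g`, for `1 ≤ i ≤ g`; by convention `a_i = 1` for out-of-range
indices (in particular `a_{g+1} = 1`). -/
def a (g i : ℕ) : F g :=
  if h : 1 ≤ i ∧ i ≤ g then FreeGroup.of (⟨i - 1, by omega⟩, false) else 1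

/-- The generator `b_i` of `F_g`, for `1 ≤ i ≤ g`. -/
def b (g i : ℕ) : F g :=
  if h : 1 ≤ i ∧ i ≤ g then FreeGroup.of (⟨i - 1, by omega⟩, true) else 1

/-- The word `c_i = b_i⁻¹ ⋯ b_2⁻¹ b_1⁻¹ (a_1 b_1 a_1⁻¹)(a_2 b_2 a_2⁻¹) ⋯ (a_i b_i a_i⁻¹)`,
with `c_0 = 1`. -/
def c (g i : ℕ) : F g :=
  (((List.range i).reverse.map fun j => (b g (j + 1))⁻¹).prod) *
    (((List.range i).map fun j => a g (j + 1) * b g (j + 1) * (a g (j + 1))⁻¹).prod)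

/-- The product `b_i b_{i+1} ⋯ b_j`. -/
def prodb (g i j : ℕ) : F g := ((List.range (j + 1 - i)).map fun l => b g (i + l)).prod

/-- `B^h_{0,1} = b_1 b_2 ⋯ b_h`. -/
def B01 (g h : ℕ) : F g := prodb g 1 h

/-- `B^h_{0,2} = b_1 b_2 ⋯ b_h · c_h a_{h+1}`. -/
def B02 (g h : ℕ) : F g := prodb g 1 h * c g h * a g (h + 1)

/-- `B^h_{0,s}` for `s = 1, 2`. -/
def B0 (g s h : ℕ) : F g := if s = 1 then B01 g h else B02 g h

/-- `B^h_{2k-1} = a_k · b_k b_{k+1} ⋯ b_{h+1-k} · c_{h+1-k} a_{h+1-k}`. -/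
def Bodd (g h k : ℕ) : F g :=
  a g k * prodb g k (h + 1 - k) * c g (h + 1 - k) * a g (h + 1 - k)

/-- `B^h_{2k} = a_k · b_{k+1} b_{k+2} ⋯ b_{h-k} · c_{h-k} a_{h+1-k}`. -/
def Beven (g h k : ℕ) : F g :=
  a g k * prodb g (k + 1) (h - k) * c g (h - k) * a g (h + 1 - k)

/-- The set of words `ℬ^h_s`: it consists of `B^h_{0,s}, B^h_1, …, B^h_h` (the odd-indexed
`B^h_{2k-1}` for `2k - 1 ≤ h` and the even-indexed `B^h_{2k}` for `2k ≤ h`), together with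
`a_{r+1}` and `c_r a_{r+1}` when `h = 2r + 1` is odd. -/
def Bset (g s h : ℕ) : Set (F g) :=
  {B0 g s h}
    ∪ {w | ∃ k, 1 ≤ k ∧ 2 * k - 1 ≤ h ∧ w = Bodd g h k}
    ∪ {w | ∃ k, 1 ≤ k ∧ 2 * k ≤ h ∧ w = Beven g h k}
    ∪ (if h % 2 = 1 then {a g (h / 2 + 1), c g (h / 2) * a g (h / 2 + 1)} else (∅ : Set (F g)))

/-- The genus-`g` surface group `π_g`, presented with generators `a_1, b_1, …, a_g, b_g`
and the single relator `c_g`. -/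
abbrev pi (g : ℕ) := PresentedGroup ({c g g} : Set (F g))

/-- The natural projection `F_g → π_g`. -/
abbrev toPi (g : ℕ) : F g →* pi g := PresentedGroup.mk _

/-- The quotient of `π_g` by the normal closure of the images of a set `S` of words. -/
abbrev quotBy (g : ℕ) (S : Set (F g)) :=
  pi g ⧸ Subgroup.normalClosure (toPi g '' S)

/-- The projection `π_g → π_g / N(S)`. -/
abbrev projBy (g : ℕ) (S : Set (F g)) : pi g →* quotBy g S :=
  QuotientGroup.mk' _

-- Layer 1: basic word lemmas
lemma a_eq (g i : ℕ) (h1 : 1 ≤ i) (h2 : i ≤ g) :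
    a g i = FreeGroup.of (⟨i - 1, by omega⟩, false) := dif_pos ⟨h1, h2⟩

lemma a_out (g i : ℕ) (h : ¬(1 ≤ i ∧ i ≤ g)) : a g i = 1 := dif_neg h

lemma b_eq (g i : ℕ) (h1 : 1 ≤ i) (h2 : i ≤ g) :
    b g i = FreeGroup.of (⟨i - 1, by omega⟩, true) := dif_pos ⟨h1, h2⟩

lemma b_out (g i : ℕ) (h : ¬(1 ≤ i ∧ i ≤ g)) : b g i = 1 := dif_neg h

lemma c_zero (g : ℕ) : c g 0 = 1 := by simp [c]

lemma c_succ (g n : ℕ) :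
    c g (n + 1) = (b g (n + 1))⁻¹ * c g n * (a g (n + 1) * b g (n + 1) * (a g (n + 1))⁻¹) := by
  unfold c
  rw [List.range_succ, List.reverse_append, List.map_append, List.prod_append,
      List.map_append, List.prod_append]
  simp [mul_assoc]

lemma prod_range_succ_shift {M : Type*} [Monoid M] (f : ℕ → M) (k n : ℕ) :
    ((List.range (n + 1)).map fun l => f (k + l)).prod
      = f k * ((List.range n).map fun l => f (k + 1 + l)).prod := by
  rw [List.range_succ_eq_map, List.map_cons, List.prod_cons, List.map_map]
  congr 1
  apply congrArg
  apply List.map_congr_left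
  intro l _
  simp only [Function.comp]
  congr 1
  omega

lemma prodb_empty (g i j : ℕ) (h : j + 1 ≤ i) : prodb g i j = 1 := by
  unfold prodb
  rw [show j + 1 - i = 0 from by omega]
  simp

lemma prodb_single (g i : ℕ) : prodb g i i = b g i := by
  unfold prodb
  rw [show i + 1 - i = 0 + 1 from by omega]
  simp [List.range_succ]

lemma prodb_cons (g i j : ℕ) (h : i ≤ j) : prodb g i j = b g i * prodb g (i + 1) j := by
  unfold prodb
  rw [show j + 1 - i = (j - i) + 1 from by omega, prod_range_succ_shift,
      show j + 1 - (i + 1) = j - i from by omega]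

lemma prodb_snoc (g i j : ℕ) (h : i ≤ j + 1) :
    prodb g i (j + 1) = prodb g i j * b g (j + 1) := by
  unfold prodb
  rw [show j + 1 + 1 - i = (j + 1 - i) + 1 from by omega, List.range_succ, List.map_append,
      List.prod_append]
  simp only [List.map_cons, List.map_nil, List.prod_cons, List.prod_nil, mul_one]
  rw [show i + (j + 1 - i) = j + 1 from by omega]

-- Layer 2: the map F_g → π_r
/-- Image of `a_i` in `π_r`. -/
def fa (r i : ℕ) : pi r :=
  if i ≤ r then toPi r (a r i)
  else if i = r + 1 then 1
  else (toPi r (a r (2 * r + 2 - i)))⁻¹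

/-- Image of `b_i` in `π_r`. -/
def fb (r i : ℕ) : pi r :=
  if i ≤ r then toPi r (b r i)
  else if i = r + 1 then 1
  else toPi r (a r (2 * r + 2 - i) * (b r (2 * r + 2 - i))⁻¹ * (a r (2 * r + 2 - i))⁻¹)

def fgen (r : ℕ) : Fin (2 * r + 1) × Bool → pi r :=
  fun p => if p.2 then fb r (p.1 + 1) else fa r (p.1 + 1)

/-- The lift `F_g →* π_r`. -/
def LL (r : ℕ) : F (2 * r + 1) →* pi r := FreeGroup.lift (fgen r)

lemma LL_a (r i : ℕ) : LL r (a (2 * r + 1) i) = fa r i := by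
  by_cases h : 1 ≤ i ∧ i ≤ 2 * r + 1
  · rw [a_eq _ _ h.1 h.2]
    unfold LL
    rw [FreeGroup.lift_apply_of]
    unfold fgen
    simp only [if_neg Bool.false_ne_true]
    have hv : ((⟨i - 1, by omega⟩ : Fin (2 * r + 1)) : ℕ) + 1 = i := by
      simp only [Fin.val_mk]; omega
    rw [hv]
  · rw [a_out _ _ h, map_one]
    unfold fa
    rcases Nat.lt_or_ge i 1 with hi | hi
    · rw [if_pos (by omega), show i = 0 from by omega, a_out _ _ (by omega), map_one]
    · rw [if_neg (by omega), if_neg (by omega), show 2 * r + 2 - i = 0 from by omega,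
        a_out _ _ (by omega), map_one, inv_one]

lemma LL_b (r i : ℕ) : LL r (b (2 * r + 1) i) = fb r i := by
  by_cases h : 1 ≤ i ∧ i ≤ 2 * r + 1
  · rw [b_eq _ _ h.1 h.2]
    unfold LL
    rw [FreeGroup.lift_apply_of]
    unfold fgen
    simp only [if_true, eq_self_iff_true]
    have hv : ((⟨i - 1, by omega⟩ : Fin (2 * r + 1)) : ℕ) + 1 = i := by
      simp only [Fin.val_mk]; omega
    rw [hv]
  · rw [b_out _ _ h, map_one]
    unfold fb
    rcases Nat.lt_or_ge i 1 with hi | hi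
    · rw [if_pos (by omega), show i = 0 from by omega, b_out _ _ (by omega), map_one]
    · rw [if_neg (by omega), if_neg (by omega), show 2 * r + 2 - i = 0 from by omega,
        a_out _ _ (by omega), b_out _ _ (by omega)]
      simp

lemma fa_low (r i : ℕ) (h : i ≤ r) : fa r i = toPi r (a r i) := if_pos h
lemma fb_low (r i : ℕ) (h : i ≤ r) : fb r i = toPi r (b r i) := if_pos h
lemma fa_mid (r : ℕ) : fa r (r + 1) = 1 := by
  unfold fa; rw [if_neg (by omega), if_pos rfl]
lemma fb_mid (r : ℕ) : fb r (r + 1) = 1 := by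
  unfold fb; rw [if_neg (by omega), if_pos rfl]
lemma fa_high (r i : ℕ) (h1 : r + 2 ≤ i) : fa r i = (toPi r (a r (2 * r + 2 - i)))⁻¹ := by
  unfold fa; rw [if_neg (by omega), if_neg (by omega)]
lemma fb_high (r i : ℕ) (h1 : r + 2 ≤ i) :
    fb r i = toPi r (a r (2 * r + 2 - i) * (b r (2 * r + 2 - i))⁻¹ * (a r (2 * r + 2 - i))⁻¹) := by
  unfold fb; rw [if_neg (by omega), if_neg (by omega)]

/-- `Y_k = (a_k b_k a_k⁻¹) ⋯ (a_r b_r a_r⁻¹)` in `F_r`. -/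
def Yw (r k : ℕ) : F r :=
  ((List.range (r + 1 - k)).map fun l =>
    a r (k + l) * b r (k + l) * (a r (k + l))⁻¹).prod

/-- `W_k = b_k ⋯ b_r` in `F_r`. -/
def Ww (r k : ℕ) : F r := prodb r k r

lemma Yw_top (r : ℕ) : Yw r (r + 1) = 1 := by
  unfold Yw; rw [show r + 1 - (r + 1) = 0 from by omega]; simp

lemma Ww_top (r : ℕ) : Ww r (r + 1) = 1 := prodb_empty _ _ _ (by omega)

lemma Yw_cons (r k : ℕ) (h : k ≤ r) :
    Yw r k = (a r k * b r k * (a r k)⁻¹) * Yw r (k + 1) := by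
  unfold Yw
  rw [show r + 1 - k = (r - k) + 1 from by omega,
    prod_range_succ_shift (fun m => a r m * b r m * (a r m)⁻¹) k (r - k),
    show r + 1 - (k + 1) = r - k from by omega]

lemma Ww_cons (r k : ℕ) (h : k ≤ r) : Ww r k = b r k * Ww r (k + 1) :=
  prodb_cons _ _ _ h

lemma toPi_c_eq_one (r : ℕ) : toPi r (c r r) = 1 := by
  have : c r r ∈ Subgroup.normalClosure ({c r r} : Set (F r)) :=
    Subgroup.subset_normalClosure rfl
  exact (QuotientGroup.eq_one_iff _).2 this

lemma toPi_Yw_eq_Ww (r : ℕ) : toPi r (Yw r 1) = toPi r (Ww r 1) := by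
  have hc := toPi_c_eq_one r
  have h1 : (((List.range r).reverse.map fun j => (b r (j + 1))⁻¹).prod : F r)
      = (Ww r 1)⁻¹ := by
    unfold Ww prodb
    rw [show r + 1 - 1 = r from by omega, List.prod_inv_reverse, List.map_map,
      List.map_reverse]
    congr 2
    apply List.map_congr_left
    intro l _
    simp only [Function.comp]
    congr 2
    omega
  have h2 : (((List.range r).map fun j =>
      a r (j + 1) * b r (j + 1) * (a r (j + 1))⁻¹).prod : F r) = Yw r 1 := by
    unfold Yw
    rw [show r + 1 - 1 = r from by omega]
    congr 1
    apply List.map_congr_left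
    intro l _
    have : l + 1 = 1 + l := by omega
    rw [this]
  unfold c at hc
  simp only [h1, h2, map_mul, map_inv] at hc
  exact (inv_mul_eq_one.mp hc).symm

-- Layer 3: the main computation in π_r
lemma LL_c_low (r : ℕ) : ∀ n, n ≤ r → LL r (c (2 * r + 1) n) = toPi r (c r n) := by
  intro n
  induction n with
  | zero => intro _; rw [c_zero, c_zero, map_one, map_one]
  | succ m ih =>
    intro hm
    rw [c_succ, c_succ, map_mul, map_mul, map_mul, map_mul, map_inv, map_inv, map_mul,
      map_mul, map_mul, map_mul, map_inv, map_inv, LL_a, LL_b, ih (by omega),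
      fa_low _ _ (by omega), fb_low _ _ (by omega)]

lemma PQ (r : ℕ) : ∀ t, t ≤ r →
    (LL r (c (2 * r + 1) (r + 1 + t))
        = toPi r (Yw r (r + 1 - t)) * (toPi r (Ww r (r + 1 - t)))⁻¹) ∧
    (LL r (prodb (2 * r + 1) (r + 1 - t) (r + 1 + t))
        = toPi r (Ww r (r + 1 - t)) * (toPi r (Yw r (r + 1 - t)))⁻¹) := by
  intro t
  induction t with
  | zero =>
    intro _
    have h1 : r + 1 - 0 = r + 1 := by omega
    have h2 : r + 1 + 0 = r + 1 := by omega
    rw [h1, h2, Yw_top, Ww_top, map_one, prodb_single]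
    constructor
    · rw [show (r + 1 : ℕ) = r + 1 from rfl, c_succ, map_mul, map_mul, map_mul, map_mul,
        map_inv, map_inv, LL_a, LL_b, LL_c_low r r le_rfl, toPi_c_eq_one, fa_mid, fb_mid]
      simp
    · rw [LL_b, fb_mid]
      simp
  | succ t ih =>
    intro ht
    obtain ⟨hc, hp⟩ := ih (by omega)
    have hk1 : r + 1 - (t + 1) = r - t := by omega
    have hk2 : r + 1 + (t + 1) = (r + 1 + t) + 1 := by omega
    have hkr : 1 ≤ r - t := by omega
    have hklow : r - t ≤ r := by omega
    have hfa : fa r (r + 1 + t + 1) = (toPi r (a r (r - t)))⁻¹ := by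
      rw [fa_high _ _ (by omega), show 2 * r + 2 - (r + 1 + t + 1) = r - t from by omega]
    have hfb : fb r (r + 1 + t + 1)
        = toPi r (a r (r - t) * (b r (r - t))⁻¹ * (a r (r - t))⁻¹) := by
      rw [fb_high _ _ (by omega), show 2 * r + 2 - (r + 1 + t + 1) = r - t from by omega]
    have hYc := Yw_cons r (r - t) hklow
    have hWc := Ww_cons r (r - t) hklow
    rw [show r - t + 1 = r + 1 - t from by omega] at hYc hWc
    constructor
    · rw [hk1, hk2, c_succ, map_mul, map_mul, map_mul, map_mul, map_inv, map_inv,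
        LL_a, LL_b, hc, hfa, hfb, hYc, hWc]
      simp only [map_mul, map_inv]
      group
    · rw [hk1, hk2, prodb_cons _ _ _ (by omega), prodb_snoc _ _ _ (by omega),
        show r - t + 1 = r + 1 - t from by omega,
        map_mul, map_mul, LL_b, LL_b, hp, hfb, hYc, hWc, fb_low _ _ hklow]
      simp only [map_mul, map_inv]
      group

-- Layer 4: membership lemmas and the two homomorphisms
lemma mem_B0 (r : ℕ) : B0 (2*r+1) 1 (2*r+1) ∈ Bset (2*r+1) 1 (2*r+1) :=
  Or.inl (Or.inl (Or.inl rfl))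

lemma mem_Bodd (r k : ℕ) (h1 : 1 ≤ k) (h2 : k ≤ r + 1) :
    Bodd (2*r+1) (2*r+1) k ∈ Bset (2*r+1) 1 (2*r+1) :=
  Or.inl (Or.inl (Or.inr ⟨k, h1, by omega, rfl⟩))

lemma mem_Beven (r k : ℕ) (h1 : 1 ≤ k) (h2 : k ≤ r) :
    Beven (2*r+1) (2*r+1) k ∈ Bset (2*r+1) 1 (2*r+1) :=
  Or.inl (Or.inr ⟨k, h1, by omega, rfl⟩)

lemma extra_set (r : ℕ) :
    (if (2*r+1) % 2 = 1 then
      ({a (2*r+1) ((2*r+1)/2 + 1), c (2*r+1) ((2*r+1)/2) * a (2*r+1) ((2*r+1)/2 + 1)} :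
        Set (F (2*r+1)))
     else (∅ : Set (F (2*r+1))))
    = {a (2*r+1) (r+1), c (2*r+1) r * a (2*r+1) (r+1)} := by
  rw [if_pos (show (2*r+1) % 2 = 1 by omega), show (2*r+1)/2 = r from by omega]

lemma mem_a_mid (r : ℕ) : a (2*r+1) (r+1) ∈ Bset (2*r+1) 1 (2*r+1) := by
  unfold Bset
  rw [extra_set r]
  exact Or.inr (Or.inl rfl)

lemma mem_ca_mid (r : ℕ) : c (2*r+1) r * a (2*r+1) (r+1) ∈ Bset (2*r+1) 1 (2*r+1) := by
  unfold Bset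
  rw [extra_set r]
  exact Or.inr (Or.inr rfl)

lemma LL_c_top (r : ℕ) : LL r (c (2*r+1) (2*r+1)) = 1 := by
  have h := (PQ r r le_rfl).1
  rw [show r + 1 + r = 2*r+1 from by omega, show r + 1 - r = 1 from by omega] at h
  rw [h, toPi_Yw_eq_Ww]
  simp

lemma LL_kills (r : ℕ) : ∀ w ∈ Bset (2*r+1) 1 (2*r+1), LL r w = 1 := by
  have hmid : LL r (a (2*r+1) (r+1)) = 1 := by rw [LL_a, fa_mid]
  intro w hw
  unfold Bset at hw
  rw [extra_set r] at hw
  rcases hw with ((h0 | hodd) | heven) | hrest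
  · rw [Set.mem_singleton_iff] at h0
    subst h0
    unfold B0 B01
    rw [if_pos rfl]
    have h := (PQ r r le_rfl).2
    rw [show r + 1 + r = 2*r+1 from by omega, show r + 1 - r = 1 from by omega] at h
    rw [h, toPi_Yw_eq_Ww]
    simp
  · obtain ⟨k, hk1, hk2, rfl⟩ := hodd
    unfold Bodd
    obtain ⟨hC, hP⟩ := PQ r (r + 1 - k) (by omega)
    rw [show r + 1 - (r + 1 - k) = k from by omega,
        show r + 1 + (r + 1 - k) = 2*r+1 + 1 - k from by omega] at hC hP
    rw [map_mul, map_mul, map_mul, LL_a, LL_a, hC, hP]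
    rcases Nat.lt_or_ge k (r+1) with hk | hk
    · rw [fa_low _ _ (by omega), fa_high _ _ (by omega),
        show 2*r+2 - (2*r+1+1-k) = k from by omega]
      group
    · rw [show k = r + 1 from by omega, show 2*r+1+1-(r+1) = r + 1 from by omega,
        fa_mid]
      group
  · obtain ⟨k, hk1, hk2, rfl⟩ := heven
    unfold Beven
    obtain ⟨hC, hP⟩ := PQ r (r - k) (by omega)
    rw [show r + 1 - (r - k) = k + 1 from by omega,
        show r + 1 + (r - k) = 2*r+1 - k from by omega] at hC hP
    rw [map_mul, map_mul, map_mul, LL_a, LL_a, hC, hP,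
        fa_low _ _ (by omega), fa_high _ _ (by omega),
        show 2*r+2 - (2*r+1+1-k) = k from by omega]
    group
  · rcases hrest with h1 | h2
    · rw [Set.mem_singleton_iff.mp h1] at *
      exact hmid
    · rw [Set.mem_singleton_iff.mp h2] at *
      rw [map_mul, LL_c_low r r le_rfl, toPi_c_eq_one, hmid, one_mul]

/-- The homomorphism `π_g →* π_r`. -/
def Phi0 (r : ℕ) : pi (2*r+1) →* pi r :=
  PresentedGroup.toGroup (f := fgen r) (by
    intro w hw
    rw [Set.mem_singleton_iff] at hw
    subst hw
    exact LL_c_top r)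

lemma Phi0_mk (r : ℕ) (w : F (2*r+1)) : Phi0 r (toPi (2*r+1) w) = LL r w := rfl

/-- The homomorphism `G₁ →* π_r`. -/
def Phi (r : ℕ) : quotBy (2*r+1) (Bset (2*r+1) 1 (2*r+1)) →* pi r :=
  QuotientGroup.lift _ (Phi0 r) (by
    apply Subgroup.normalClosure_le_normal
    rintro x ⟨w, hw, rfl⟩
    have : Phi0 r (toPi (2*r+1) w) = 1 := by rw [Phi0_mk]; exact LL_kills r w hw
    exact this)

lemma Phi_mk (r : ℕ) (w : F (2*r+1)) :
    Phi r (projBy (2*r+1) (Bset (2*r+1) 1 (2*r+1)) (toPi (2*r+1) w)) = LL r w := rfl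

-- Layer 5: the homomorphism π_r →* G₁
def emb (r : ℕ) : Fin r × Bool → Fin (2*r+1) × Bool :=
  fun p => (⟨p.1, by omega⟩, p.2)

/-- The projection `F_g →* G₁`. -/
def proj (r : ℕ) : F (2*r+1) →* quotBy (2*r+1) (Bset (2*r+1) 1 (2*r+1)) :=
  (projBy (2*r+1) (Bset (2*r+1) 1 (2*r+1))).comp (toPi (2*r+1))

lemma proj_kills (r : ℕ) : ∀ w ∈ Bset (2*r+1) 1 (2*r+1), proj r w = 1 := by
  intro w hw
  have : toPi (2*r+1) w ∈
      Subgroup.normalClosure (toPi (2*r+1) '' Bset (2*r+1) 1 (2*r+1)) :=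
    Subgroup.subset_normalClosure ⟨w, hw, rfl⟩
  exact (QuotientGroup.eq_one_iff _).2 this

def fgen' (r : ℕ) : Fin r × Bool → quotBy (2*r+1) (Bset (2*r+1) 1 (2*r+1)) :=
  fun p => proj r (FreeGroup.of (emb r p))

def LL' (r : ℕ) : F r →* quotBy (2*r+1) (Bset (2*r+1) 1 (2*r+1)) :=
  FreeGroup.lift (fgen' r)

lemma LL'_a (r i : ℕ) (h : i ≤ r) : LL' r (a r i) = proj r (a (2*r+1) i) := by
  rcases Nat.lt_or_ge i 1 with hi | hi
  · rw [a_out _ _ (by omega), a_out _ _ (by omega), map_one, map_one]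
  · rw [a_eq _ _ hi h, a_eq _ _ hi (by omega)]
    rfl

lemma LL'_b (r i : ℕ) (h : i ≤ r) : LL' r (b r i) = proj r (b (2*r+1) i) := by
  rcases Nat.lt_or_ge i 1 with hi | hi
  · rw [b_out _ _ (by omega), b_out _ _ (by omega), map_one, map_one]
  · rw [b_eq _ _ hi h, b_eq _ _ hi (by omega)]
    rfl

lemma LL'_c (r : ℕ) : ∀ n, n ≤ r → LL' r (c r n) = proj r (c (2*r+1) n) := by
  intro n
  induction n with
  | zero => intro _; rw [c_zero, c_zero, map_one, map_one]
  | succ m ih =>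
    intro hm
    rw [c_succ r m, c_succ (2*r+1) m, map_mul, map_mul, map_mul, map_mul, map_inv, map_inv, map_mul,
      map_mul, map_mul, map_mul, map_inv, map_inv, ih (by omega),
      LL'_a _ _ (by omega), LL'_b _ _ (by omega)]

lemma proj_a_mid (r : ℕ) : proj r (a (2*r+1) (r+1)) = 1 := proj_kills r _ (mem_a_mid r)

lemma proj_c_r (r : ℕ) : proj r (c (2*r+1) r) = 1 := by
  have h := proj_kills r _ (mem_ca_mid r)
  rw [map_mul, proj_a_mid, mul_one] at h
  exact h

/-- The homomorphism `π_r →* G₁`. -/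
def Psi (r : ℕ) : pi r →* quotBy (2*r+1) (Bset (2*r+1) 1 (2*r+1)) :=
  PresentedGroup.toGroup (f := fgen' r) (by
    intro w hw
    rw [Set.mem_singleton_iff] at hw
    subst hw
    show LL' r (c r r) = 1
    rw [LL'_c r r le_rfl, proj_c_r])

lemma Psi_mk (r : ℕ) (w : F r) : Psi r (toPi r w) = LL' r w := rfl

-- Layer 6: consequences of the relations inside G₁
lemma proj_b_mid (r : ℕ) : proj r (b (2*r+1) (r+1)) = 1 := by
  have h := proj_kills r _ (mem_Bodd r (r+1) (by omega) le_rfl)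
  unfold Bodd at h
  rw [show 2*r+1+1-(r+1) = r+1 from by omega, prodb_single, c_succ (2*r+1) r] at h
  simp only [map_mul, map_inv, proj_a_mid, proj_c_r, one_mul, mul_one, inv_one] at h
  simpa [mul_assoc] using h

lemma G_rel (r : ℕ) : ∀ t, t ≤ r →
    proj r (a (2*r+1) (r+1+t)) = (proj r (a (2*r+1) (r+1-t)))⁻¹ ∧
    proj r (b (2*r+1) (r+1+t))
      = proj r (a (2*r+1) (r+1-t)) * (proj r (b (2*r+1) (r+1-t)))⁻¹ *
        (proj r (a (2*r+1) (r+1-t)))⁻¹ ∧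
    proj r (prodb (2*r+1) (r+1-t) (r+1+t)) * proj r (c (2*r+1) (r+1+t)) = 1 := by
  intro t
  induction t with
  | zero =>
    intro _
    simp only [Nat.add_zero, Nat.sub_zero]
    have pc1 : proj r (c (2*r+1) (r+1)) = 1 := by
      rw [c_succ (2*r+1) r]
      simp only [map_mul, map_inv, proj_a_mid, proj_c_r, proj_b_mid, one_mul, mul_one,
        inv_one]
    refine ⟨?_, ?_, ?_⟩
    · rw [proj_a_mid]; simp
    · rw [proj_b_mid, proj_a_mid]; simp
    · rw [prodb_single, proj_b_mid, pc1]; simp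
  | succ t ih =>
    intro ht
    obtain ⟨-, -, hC⟩ := ih (by omega)
    rw [show r+1+(t+1) = r+1+t+1 from by omega, show r+1-(t+1) = r-t from by omega]
    have hM : proj r (prodb (2*r+1) (r+1-t) (r+1+t))
        = (proj r (c (2*r+1) (r+1+t)))⁻¹ := eq_inv_of_mul_eq_one_left hC
    have heven := proj_kills r _ (mem_Beven r (r-t) (by omega) (by omega))
    unfold Beven at heven
    rw [show 2*r+1-(r-t) = r+1+t from by omega, show r-t+1 = r+1-t from by omega,
        show 2*r+1+1-(r-t) = r+1+t+1 from by omega] at heven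
    simp only [map_mul] at heven
    have hAn : proj r (a (2*r+1) (r+1+t+1)) = (proj r (a (2*r+1) (r-t)))⁻¹ := by
      have e : proj r (a (2*r+1) (r+1+t+1))
          = (proj r (c (2*r+1) (r+1+t)))⁻¹ * (proj r (prodb (2*r+1) (r+1-t) (r+1+t)))⁻¹ *
            (proj r (a (2*r+1) (r-t)))⁻¹ *
            (proj r (a (2*r+1) (r-t)) * proj r (prodb (2*r+1) (r+1-t) (r+1+t)) *
              proj r (c (2*r+1) (r+1+t)) * proj r (a (2*r+1) (r+1+t+1))) := by
        group
      rw [heven, hM] at e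
      simpa using e
    have hodd := proj_kills r _ (mem_Bodd r (r-t) (by omega) (by omega))
    unfold Bodd at hodd
    rw [show 2*r+1+1-(r-t) = r+1+t+1 from by omega] at hodd
    simp only [map_mul] at hodd
    have hPC : proj r (prodb (2*r+1) (r-t) (r+1+t+1)) * proj r (c (2*r+1) (r+1+t+1)) = 1 := by
      have e : proj r (prodb (2*r+1) (r-t) (r+1+t+1)) * proj r (c (2*r+1) (r+1+t+1))
          = (proj r (a (2*r+1) (r-t)))⁻¹ *
            (proj r (a (2*r+1) (r-t)) * proj r (prodb (2*r+1) (r-t) (r+1+t+1)) *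
             proj r (c (2*r+1) (r+1+t+1)) * proj r (a (2*r+1) (r+1+t+1))) *
            (proj r (a (2*r+1) (r+1+t+1)))⁻¹ := by group
      rw [hodd, hAn] at e
      simpa using e
    refine ⟨hAn, ?_, hPC⟩
    have hPexp : proj r (prodb (2*r+1) (r-t) (r+1+t+1))
        = proj r (b (2*r+1) (r-t)) * (proj r (prodb (2*r+1) (r+1-t) (r+1+t)) *
            proj r (b (2*r+1) (r+1+t+1))) := by
      rw [prodb_cons (2*r+1) (r-t) (r+1+t+1) (by omega),
          show r-t+1 = r+1-t from by omega,
          prodb_snoc (2*r+1) (r+1-t) (r+1+t) (by omega), map_mul, map_mul]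
    have hCnexp : proj r (c (2*r+1) (r+1+t+1))
        = (proj r (b (2*r+1) (r+1+t+1)))⁻¹ * proj r (c (2*r+1) (r+1+t)) *
          (proj r (a (2*r+1) (r+1+t+1)) * proj r (b (2*r+1) (r+1+t+1)) *
           (proj r (a (2*r+1) (r+1+t+1)))⁻¹) := by
      rw [c_succ (2*r+1) (r+1+t)]
      simp only [map_mul, map_inv]
    have hbig := hPC
    rw [hPexp, hCnexp] at hbig
    have e3 : proj r (b (2*r+1) (r+1+t+1))
        = (proj r (a (2*r+1) (r+1+t+1)))⁻¹ * (proj r (c (2*r+1) (r+1+t)))⁻¹ *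
          (proj r (prodb (2*r+1) (r+1-t) (r+1+t)))⁻¹ * (proj r (b (2*r+1) (r-t)))⁻¹ *
          (proj r (b (2*r+1) (r-t)) * (proj r (prodb (2*r+1) (r+1-t) (r+1+t)) *
              proj r (b (2*r+1) (r+1+t+1))) *
            ((proj r (b (2*r+1) (r+1+t+1)))⁻¹ * proj r (c (2*r+1) (r+1+t)) *
             (proj r (a (2*r+1) (r+1+t+1)) * proj r (b (2*r+1) (r+1+t+1)) *
              (proj r (a (2*r+1) (r+1+t+1)))⁻¹))) *
          proj r (a (2*r+1) (r+1+t+1)) := by group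
    rw [hbig, hM, hAn] at e3
    rw [e3]
    group

-- Layer 7: the two compositions and the final theorem
lemma LL_of (r : ℕ) (y : Fin (2*r+1) × Bool) : LL r (FreeGroup.of y) = fgen r y :=
  FreeGroup.lift_apply_of

lemma Phi_comp_Psi (r : ℕ) : (Phi r).comp (Psi r) = MonoidHom.id (pi r) := by
  apply PresentedGroup.ext
  intro x
  show Phi r (Psi r (PresentedGroup.of x)) = PresentedGroup.of x
  have h1 : Psi r (PresentedGroup.of x) = fgen' r x := PresentedGroup.toGroup.of _
  rw [h1]
  have h2 : Phi r (fgen' r x) = LL r (FreeGroup.of (emb r x)) := rfl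
  rw [h2, LL_of]
  rcases x with ⟨i, s⟩
  have hle : (i : ℕ) + 1 ≤ r := Nat.succ_le_of_lt i.isLt
  cases s
  · show fa r ((⟨(i : ℕ), by omega⟩ : Fin (2*r+1)) + 1 : ℕ) = _
    simp only [Fin.val_mk]
    rw [fa_low r _ hle, a_eq r _ (by omega) hle]
    simp only [Nat.add_sub_cancel]
    rfl
  · show fb r ((⟨(i : ℕ), by omega⟩ : Fin (2*r+1)) + 1 : ℕ) = _
    simp only [Fin.val_mk]
    rw [fb_low r _ hle, b_eq r _ (by omega) hle]
    simp only [Nat.add_sub_cancel]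
    rfl

lemma Psi_comp_Phi (r : ℕ) :
    (Psi r).comp (Phi r) = MonoidHom.id (quotBy (2*r+1) (Bset (2*r+1) 1 (2*r+1))) := by
  apply QuotientGroup.monoidHom_ext
  apply PresentedGroup.ext
  intro x
  show Psi r (Phi r (proj r (FreeGroup.of x))) = proj r (FreeGroup.of x)
  rw [show Phi r (proj r (FreeGroup.of x)) = LL r (FreeGroup.of x) from rfl, LL_of]
  rcases x with ⟨i, s⟩
  have hi := i.isLt
  cases s
  · have key : FreeGroup.of ((⟨i, false⟩ : Fin (2*r+1) × Bool))
        = a (2*r+1) ((i : ℕ) + 1) := by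
      rw [a_eq _ _ (by omega) (by omega)]
      simp only [Nat.add_sub_cancel]
    rw [key, show fgen r (i, false) = fa r ((i : ℕ) + 1) from rfl]
    rcases Nat.lt_trichotomy ((i : ℕ) + 1) (r + 1) with hc | hc | hc
    · rw [fa_low r _ (by omega), Psi_mk, LL'_a r _ (by omega)]
    · rw [hc, fa_mid, map_one, proj_a_mid]
    · rw [fa_high r _ (by omega), map_inv, Psi_mk, LL'_a r _ (by omega)]
      obtain ⟨hA, -, -⟩ := G_rel r ((i : ℕ) + 1 - (r + 1)) (by omega)
      rw [show r + 1 + ((i : ℕ) + 1 - (r + 1)) = (i : ℕ) + 1 from by omega,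
          show r + 1 - ((i : ℕ) + 1 - (r + 1)) = 2*r+2 - ((i : ℕ) + 1) from by omega] at hA
      rw [hA]
  · have key : FreeGroup.of ((⟨i, true⟩ : Fin (2*r+1) × Bool))
        = b (2*r+1) ((i : ℕ) + 1) := by
      rw [b_eq _ _ (by omega) (by omega)]
      simp only [Nat.add_sub_cancel]
    rw [key, show fgen r (i, true) = fb r ((i : ℕ) + 1) from rfl]
    rcases Nat.lt_trichotomy ((i : ℕ) + 1) (r + 1) with hc | hc | hc
    · rw [fb_low r _ (by omega), Psi_mk, LL'_b r _ (by omega)]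
    · rw [hc, fb_mid, map_one, proj_b_mid]
    · rw [fb_high r _ (by omega), Psi_mk]
      rw [map_mul, map_mul, map_inv, map_inv, LL'_a r _ (by omega), LL'_b r _ (by omega)]
      obtain ⟨-, hB, -⟩ := G_rel r ((i : ℕ) + 1 - (r + 1)) (by omega)
      rw [show r + 1 + ((i : ℕ) + 1 - (r + 1)) = (i : ℕ) + 1 from by omega,
          show r + 1 - ((i : ℕ) + 1 - (r + 1)) = 2*r+2 - ((i : ℕ) + 1) from by omega] at hB
      rw [hB]

theorem G1_iso_genus_r_odd' (r : ℕ) :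
    Nonempty (quotBy (2*r+1) (Bset (2*r+1) 1 (2*r+1)) ≃* pi r) :=
  ⟨MonoidHom.toMulEquiv (Phi r) (Psi r) (Psi_comp_Phi r) (Phi_comp_Psi r)⟩


/-- For `g = 2r + 1` with `r ≥ 2`, the group `G_1 = π_g / N(ℬ^g_1)` is
isomorphic to the genus-`r` surface group `π_r`. -/
theorem G1_iso_genus_r_odd (r g : ℕ) (hr : 2 ≤ r) (hg : g = 2 * r + 1) :
    Nonempty (quotBy g (Bset g 1 g) ≃* pi r) := by
  subst hg
  exact G1_iso_genus_r_odd' r
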